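/- For loads x_1, ..., x_k that are nonnegative integers summing to n, the population variance Σ(x_i − n/k)²/k is minimized exactly when every x_i ∈ {⌊n/k⌋, ⌈n/k⌉}. -/

import Mathlib

open Finset

private lemma consec_nonneg (a : ℤ) : 0 ≤ a * (a - 1) := by
  rcases le_or_gt 1 a with h | h
  · exact mul_nonneg (by omega) (by omega)
  · have h1 : 0 ≤ -a := by omega
    have h2 : 0 ≤ -(a-1) := by omega
    nlinarith

/-- For integer loads `x₁, …, x_k ≥ 0` summing to `n`, the population variance
`Σ (x_i − n/k)² / k` is minimized (over all integer load vectors summing to `n`)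
exactly when every load lies in `{⌊n/k⌋, ⌈n/k⌉}`. -/
theorem variance_minimized_iff_balanced
    (k : ℕ) (hk : 1 ≤ k) (n : ℕ) (x : Fin k → ℕ) (hx : ∑ i, x i = n) :
    (∀ y : Fin k → ℕ, (∑ i, y i = n) →
        (∑ i, ((x i : ℝ) - (n : ℝ) / (k : ℝ)) ^ 2) / (k : ℝ)
          ≤ (∑ i, ((y i : ℝ) - (n : ℝ) / (k : ℝ)) ^ 2) / (k : ℝ))
      ↔ (∀ i, x i = n / k ∨ x i = (n + k - 1) / k) := by
  have hk0 : (0:ℝ) < (k:ℝ) := by exact_mod_cast hk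
  set q := n / k with hq
  set r := n % k with hr
  have hdm : k * q + r = n := Nat.div_add_mod n k
  have hrk : r < k := Nat.mod_lt n (by omega)
  have hceil0 : r = 0 → (n + k - 1) / k = q := by
    intro h0
    have h1 : n + k - 1 = k * q + (k - 1) := by omega
    rw [h1, Nat.mul_add_div (by omega), Nat.div_eq_of_lt (by omega), Nat.add_zero]
  have hceil1 : r ≠ 0 → (n + k - 1) / k = q + 1 := by
    intro h0
    have hmul : k * (q + 1) = k * q + k := by ring
    have h1 : n + k - 1 = k * (q + 1) + (r - 1) := by omega
    rw [h1, Nat.mul_add_div (by omega), Nat.div_eq_of_lt (by omega), Nat.add_zero]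
  -- the variance identity
  have key : ∀ y : Fin k → ℕ, (∑ i, y i = n) →
      (∑ i, ((y i : ℝ) - (n:ℝ)/(k:ℝ))^2)
        = ((∑ i, (y i:ℤ)^2 : ℤ) : ℝ) - (n:ℝ)^2/(k:ℝ) := by
    intro y hy
    have hyc : (∑ i, (y i : ℝ)) = n := by exact_mod_cast congrArg (Nat.cast : ℕ → ℝ) hy
    have expand : ∀ i ∈ Finset.univ, ((y i:ℝ) - (n:ℝ)/(k:ℝ))^2
        = (y i:ℝ)^2 - 2*((n:ℝ)/(k:ℝ))*(y i:ℝ) + ((n:ℝ)/(k:ℝ))^2 := by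
      intro i _; ring
    rw [Finset.sum_congr rfl expand, Finset.sum_add_distrib, Finset.sum_sub_distrib,
      ← Finset.mul_sum, hyc, Finset.sum_const, Finset.card_univ, Fintype.card_fin]
    push_cast
    field_simp [hk0.ne']
    have e : (k:ℝ) * k • ((n:ℝ)^2 / (k:ℝ)^2) = (n:ℝ)^2 := by
      rw [nsmul_eq_mul, ← mul_assoc, ← sq, mul_div_assoc', mul_comm, mul_div_assoc,
        div_self (pow_ne_zero 2 hk0.ne'), mul_one]
    rw [e]
    ring
  -- linear lower-bound computation
  have lin : ∀ y : Fin k → ℕ, (∑ i, y i = n) →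
      ∑ i, ((q:ℤ)^2 + (2*(q:ℤ)+1)*((y i:ℤ) - (q:ℤ)))
        = (k:ℤ)*(q:ℤ)^2 + (2*(q:ℤ)+1)*(r:ℤ) := by
    intro y hy
    have hyc : (∑ i, (y i : ℤ)) = n := by exact_mod_cast congrArg (Nat.cast : ℕ → ℤ) hy
    have hdmz : (k:ℤ) * (q:ℤ) + (r:ℤ) = (n:ℤ) := by exact_mod_cast hdm
    rw [Finset.sum_add_distrib, Finset.sum_const, Finset.card_univ, Fintype.card_fin,
      ← Finset.mul_sum, Finset.sum_sub_distrib, hyc, Finset.sum_const, Finset.card_univ,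
      Fintype.card_fin]
    simp only [nsmul_eq_mul]
    linear_combination (-(2*(q:ℤ)+1)) * hdmz
  have lower : ∀ y : Fin k → ℕ, (∑ i, y i = n) →
      (k:ℤ)*(q:ℤ)^2 + (2*(q:ℤ)+1)*(r:ℤ) ≤ ∑ i, (y i:ℤ)^2 := by
    intro y hy
    rw [← lin y hy]
    apply Finset.sum_le_sum
    intro i _
    nlinarith [consec_nonneg ((y i:ℤ) - (q:ℤ))]
  have exact_val : ∀ z : Fin k → ℕ, (∑ i, z i = n) → (∀ i, z i = q ∨ z i = (n + k - 1)/k) →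
      ∑ i, (z i:ℤ)^2 = (k:ℤ)*(q:ℤ)^2 + (2*(q:ℤ)+1)*(r:ℤ) := by
    intro z hz hb
    rw [← lin z hz]
    apply Finset.sum_congr rfl
    intro i _
    have hcases : (z i : ℤ) = (q:ℤ) ∨ (z i:ℤ) = (q:ℤ) + 1 := by
      rcases hb i with h | h
      · left; exact_mod_cast h
      · rcases Nat.eq_zero_or_pos r with h0 | h0
        · left; rw [hceil0 h0] at h; exact_mod_cast h
        · right; rw [hceil1 (by omega)] at h; exact_mod_cast h
    rcases hcases with h | h <;> rw [h] <;> ring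
  -- the balanced vector exists
  have hb : ∃ b : Fin k → ℕ, (∑ i, b i = n) ∧ (∀ i, b i = q ∨ b i = (n+k-1)/k) := by
    refine ⟨fun i => if (i:ℕ) < r then q + 1 else q, ?_, ?_⟩
    · rw [Fin.sum_univ_eq_sum_range (fun i => if i < r then q+1 else q)]
      have hsplit : ∀ i ∈ Finset.range k,
          (if i < r then q+1 else q) = q + (if i < r then 1 else 0) := by
        intro i _; split <;> omega
      rw [Finset.sum_congr rfl hsplit, Finset.sum_add_distrib, Finset.sum_const,
        Finset.card_range, Finset.sum_boole]
      have hfilt : (Finset.range k).filter (fun i => i < r) = Finset.range r := by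
        ext a; simp; omega
      rw [hfilt, Finset.card_range]
      simp only [smul_eq_mul]
      push_cast
      omega
    · intro i
      by_cases h : (i:ℕ) < r
      · right; simp only [if_pos h]; rw [hceil1 (by omega)]
      · left; simp only [if_neg h]
  constructor
  · -- minimality implies balanced
    intro hmin i
    obtain ⟨b, hbsum, hbbal⟩ := hb
    have h1 := hmin b hbsum
    rw [key x hx, key b hbsum] at h1
    have h2 : (∑ i, (x i:ℤ)^2) ≤ ∑ i, (b i:ℤ)^2 := by
      have h3 : ((∑ i, (x i:ℤ)^2 : ℤ):ℝ) ≤ ((∑ i, (b i:ℤ)^2 : ℤ):ℝ) := by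
        have := (div_le_div_iff_of_pos_right hk0).mp h1
        linarith
      exact_mod_cast h3
    have hSx : ∑ i, (x i:ℤ)^2 = (k:ℤ)*(q:ℤ)^2 + (2*(q:ℤ)+1)*(r:ℤ) := by
      refine le_antisymm ?_ (lower x hx)
      calc ∑ i, (x i:ℤ)^2 ≤ ∑ i, (b i:ℤ)^2 := h2
        _ = _ := exact_val b hbsum hbbal
    have hzero : ∀ j : Fin k,
        (x j:ℤ)^2 - ((q:ℤ)^2 + (2*(q:ℤ)+1)*((x j:ℤ)-(q:ℤ))) = 0 := by
      have hsum0 : ∑ j, ((x j:ℤ)^2 - ((q:ℤ)^2 + (2*(q:ℤ)+1)*((x j:ℤ)-(q:ℤ)))) = 0 := by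
        rw [Finset.sum_sub_distrib, hSx, lin x hx]; ring
      intro j
      refine (Finset.sum_eq_zero_iff_of_nonneg ?_).mp hsum0 j (Finset.mem_univ j)
      intro j _
      nlinarith [consec_nonneg ((x j:ℤ) - (q:ℤ))]
    have hval : ∀ j : Fin k, x j = q ∨ x j = q + 1 := by
      intro j
      have h := hzero j
      have h2 : ((x j:ℤ) - (q:ℤ)) * ((x j:ℤ) - (q:ℤ) - 1) = 0 := by linarith [sq_nonneg ((x j:ℤ) - (q:ℤ))]; 
      rcases mul_eq_zero.mp h2 with h3 | h3
      · left; have : (x j:ℤ) = (q:ℤ) := by linarith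
        exact_mod_cast this
      · right; have : (x j:ℤ) = (q:ℤ) + 1 := by linarith
        exact_mod_cast this
    rcases hval i with h | h
    · left; exact h
    · -- x i = q + 1 forces r ≠ 0
      have hr0 : r ≠ 0 := by
        intro h0
        have hlt : ∑ _j : Fin k, q < ∑ j, x j := by
          refine Finset.sum_lt_sum (fun j _ => ?_) ⟨i, Finset.mem_univ i, ?_⟩
          · rcases hval j with h' | h' <;> omega
          · omega
        rw [hx] at hlt
        simp only [Finset.sum_const, Finset.card_univ, Fintype.card_fin, smul_eq_mul] at hlt
        omega
      right; rw [hceil1 hr0]; exact h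
  · -- balanced implies minimal
    intro hbal y hy
    have hx2 := exact_val x hx hbal
    have hy2 := lower y hy
    have hle : (∑ i, (x i:ℤ)^2) ≤ ∑ i, (y i:ℤ)^2 := by rw [hx2]; exact hy2
    rw [key x hx, key y hy]
    have hleR : ((∑ i, (x i:ℤ)^2 : ℤ):ℝ) ≤ ((∑ i, (y i:ℤ)^2 : ℤ):ℝ) := by exact_mod_cast hle
    gcongr
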